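/- Let α > −1/2 be real, s > 0, and let P^{(∞)}_α(z) = [[1,0],[2αi,1]] · diag((z+1)^{−1/4}, (z+1)^{1/4}) · V · diag(w(z)^{−α}, w(z)^{α}) on ℂ∖(−∞,0], with w(z) = ((z+1)^{1/2}+1)/((z+1)^{1/2}−1), V = (1/√2)[[1,i],[i,1]], and principal branches of all powers. Define on {z : |z+1| < 1/2, Im z ≠ 0} the matrix function E_α(z) = P^{(∞)}_α(z) · diag(e^{−απi}, e^{απi}) · V^{−1} · diag((s(z+1))^{1/4}, (s(z+1))^{−1/4}) for Im z > 0, and E_α(z) = P^{(∞)}_α(z) · diag(e^{απi}, e^{−απi}) · V^{−1} · diag((s(z+1))^{1/4}, (s(z+1))^{−1/4}) for Im z < 0, where (s(z+1))^{±1/4} = s^{±1/4}(z+1)^{±1/4} with the principal branch of (z+1)^{±1/4}. Then E_α extends to a holomorphic matrix-valued function on the whole disc {z : |z+1| < 1/2}. -/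

import Mathlib

open Complex Matrix

/-- `V = (1/√2)[[1, i], [i, 1]]`. -/
noncomputable def Vmat : Matrix (Fin 2) (Fin 2) ℂ :=
  ((Real.sqrt 2 : ℂ))⁻¹ • !![1, I; I, 1]

/-- `w(z) = ((z+1)^{1/2}+1)/((z+1)^{1/2}−1)`, principal branch. -/
noncomputable def wFun (z : ℂ) : ℂ :=
  ((z + 1) ^ ((1 : ℂ) / 2) + 1) / ((z + 1) ^ ((1 : ℂ) / 2) - 1)

/-- The global parametrix `P^{(∞)}_α`. -/
noncomputable def Pinf (α : ℝ) (z : ℂ) : Matrix (Fin 2) (Fin 2) ℂ :=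
  !![1, 0; 2 * (α : ℂ) * I, 1] *
  !![(z + 1) ^ (-(1 : ℂ) / 4), 0; 0, (z + 1) ^ ((1 : ℂ) / 4)] *
  Vmat *
  !![wFun z ^ (-(α : ℂ)), 0; 0, wFun z ^ ((α : ℂ))]

/-- `diag((s(z+1))^{1/4}, (s(z+1))^{−1/4})` where `(s(z+1))^{±1/4} = s^{±1/4}(z+1)^{±1/4}`. -/
noncomputable def scaleDiag (s : ℝ) (z : ℂ) : Matrix (Fin 2) (Fin 2) ℂ :=
  !![((s ^ ((1 : ℝ) / 4) : ℝ) : ℂ) * (z + 1) ^ ((1 : ℂ) / 4), 0;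
     0, ((s ^ (-(1 : ℝ) / 4) : ℝ) : ℂ) * (z + 1) ^ (-(1 : ℂ) / 4)]

open FormalMultilinearSeries

noncomputable def Mser : FormalMultilinearSeries ℂ ℂ ℂ :=
  ofScalars ℂ (fun k => 2 / (2 * (k : ℂ) + 1))
noncomputable def CEser : FormalMultilinearSeries ℂ ℂ ℂ :=
  ofScalars ℂ (fun k => (((2 * k).factorial : ℂ))⁻¹)
noncomputable def SEser : FormalMultilinearSeries ℂ ℂ ℂ :=
  ofScalars ℂ (fun k => (((2 * k + 1).factorial : ℂ))⁻¹)

noncomputable def Mfun : ℂ → ℂ := Mser.sum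
noncomputable def CEfun : ℂ → ℂ := CEser.sum
noncomputable def SEfun : ℂ → ℂ := SEser.sum

lemma Mser_radius : 1 ≤ Mser.radius := by
  have := Mser.le_radius_of_bound 2 (r := 1) ?_
  · simpa using this
  · intro n
    rw [Mser, ofScalars_norm]
    have h1 : (1:ℝ) ≤ 2 * (n:ℝ) + 1 := by nlinarith [Nat.cast_nonneg (α := ℝ) n]
    have : ‖2 / (2 * (n : ℂ) + 1)‖ ≤ 2 := by
      rw [norm_div]
      have h2 : ‖2 * (n : ℂ) + 1‖ = 2 * (n:ℝ) + 1 := by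
        rw [show (2 * (n:ℂ) + 1) = ((2 * (n:ℕ) + 1 : ℕ) : ℂ) by push_cast; ring]
        rw [Complex.norm_natCast]
        push_cast
        ring
      rw [h2]
      rw [div_le_iff₀ (by linarith)]
      simp only [Complex.norm_ofNat]
      nlinarith
    simpa using this

lemma factser_radius (c : ℕ → ℂ) (h : ∀ n, ‖c n‖ ≤ ((n.factorial : ℝ))⁻¹) :
    (ofScalars ℂ c).radius = ⊤ := by
  apply FormalMultilinearSeries.radius_eq_top_of_summable_norm
  intro r
  have hs := Real.summable_pow_div_factorial (r : ℝ)
  apply Summable.of_nonneg_of_le (fun n => by positivity) _ hs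
  intro n
  rw [ofScalars_norm]
  calc ‖c n‖ * (r:ℝ) ^ n ≤ ((n.factorial : ℝ))⁻¹ * (r:ℝ)^n := by
        apply mul_le_mul_of_nonneg_right (h n) (by positivity)
    _ = (r:ℝ)^n / n.factorial := by ring

lemma CEser_radius : CEser.radius = ⊤ := by
  apply factser_radius
  intro n
  rw [norm_inv]
  have h1 : (n.factorial : ℝ) ≤ ((2*n).factorial : ℝ) := by
    exact_mod_cast Nat.factorial_le (by omega)
  have h2 : ‖((2*n).factorial : ℂ)‖ = ((2*n).factorial : ℝ) := by
    norm_cast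
  rw [h2]
  apply inv_anti₀ (by positivity) h1

lemma SEser_radius : SEser.radius = ⊤ := by
  apply factser_radius
  intro n
  rw [norm_inv]
  have h1 : (n.factorial : ℝ) ≤ ((2*n+1).factorial : ℝ) := by
    exact_mod_cast Nat.factorial_le (by omega)
  have h2 : ‖((2*n+1).factorial : ℂ)‖ = ((2*n+1).factorial : ℝ) := by
    norm_cast
  rw [h2]
  apply inv_anti₀ (by positivity) h1

lemma mem_ball_of_norm {w : ℂ} {p : FormalMultilinearSeries ℂ ℂ ℂ} (h : (‖w‖₊ : ENNReal) < p.radius) :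
    w ∈ Metric.eball (0:ℂ) p.radius := by
  rwa [EMetric.mem_ball, edist_zero_right]

lemma diffAt_of_radius {w : ℂ} {p : FormalMultilinearSeries ℂ ℂ ℂ}
    (h : (‖w‖₊ : ENNReal) < p.radius) : DifferentiableAt ℂ p.sum w := by
  have hpos : 0 < p.radius := lt_of_le_of_lt (zero_le) h
  have H := (p.hasFPowerSeriesOnBall hpos).differentiableOn
  exact H.differentiableAt (EMetric.isOpen_ball.mem_nhds (mem_ball_of_norm h))

lemma hasSum_of_radius {w : ℂ} {c : ℕ → ℂ} (h : (‖w‖₊ : ENNReal) < (ofScalars ℂ c).radius) :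
    HasSum (fun n => c n * w ^ n) ((ofScalars ℂ c).sum w) := by
  have := (ofScalars ℂ c).hasSum (mem_ball_of_norm h)
  simpa only [ofScalars_apply_eq, smul_eq_mul] using this

lemma Mfun_diffAt {w : ℂ} (h : ‖w‖ < 1) : DifferentiableAt ℂ Mfun w := by
  apply diffAt_of_radius
  refine lt_of_lt_of_le ?_ Mser_radius
  exact_mod_cast h

lemma CEfun_diffAt (w : ℂ) : DifferentiableAt ℂ CEfun w := by
  apply diffAt_of_radius; rw [CEser_radius]; exact ENNReal.coe_lt_top

lemma SEfun_diffAt (w : ℂ) : DifferentiableAt ℂ SEfun w := by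
  apply diffAt_of_radius; rw [SEser_radius]; exact ENNReal.coe_lt_top

lemma hasSum_Mfun {w : ℂ} (h : ‖w‖ < 1) :
    HasSum (fun k : ℕ => 2 / (2 * (k : ℂ) + 1) * w ^ k) (Mfun w) := by
  apply hasSum_of_radius (c := fun k => 2 / (2 * (k : ℂ) + 1))
  refine lt_of_lt_of_le ?_ Mser_radius
  exact_mod_cast h

lemma hasSum_CEfun (w : ℂ) :
    HasSum (fun k : ℕ => (((2*k).factorial : ℂ))⁻¹ * w ^ k) (CEfun w) := by
  apply hasSum_of_radius (c := fun k => (((2*k).factorial : ℂ))⁻¹)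
  rw [show ofScalars ℂ (fun k => (((2*k).factorial : ℂ))⁻¹) = CEser from rfl, CEser_radius]
  exact ENNReal.coe_lt_top

lemma hasSum_SEfun (w : ℂ) :
    HasSum (fun k : ℕ => (((2*k+1).factorial : ℂ))⁻¹ * w ^ k) (SEfun w) := by
  apply hasSum_of_radius (c := fun k => (((2*k+1).factorial : ℂ))⁻¹)
  rw [show ofScalars ℂ (fun k => (((2*k+1).factorial : ℂ))⁻¹) = SEser from rfl, SEser_radius]
  exact ENNReal.coe_lt_top

lemma cosh_eq_CEfun (x : ℂ) : Complex.cosh x = CEfun (x ^ 2) := by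
  have h1 := hasSum_CEfun (x ^ 2)
  have h2 := Complex.hasSum_cosh x
  have h2' : HasSum (fun n : ℕ => (((2*n).factorial : ℂ))⁻¹ * (x ^ 2) ^ n) (Complex.cosh x) := by
    refine h2.congr_fun fun n => ?_
    rw [← pow_mul]
    ring
  exact h2'.unique h1

lemma sinh_eq_SEfun (x : ℂ) : Complex.sinh x = x * SEfun (x ^ 2) := by
  have h1 := (hasSum_SEfun (x ^ 2)).mul_left x
  have h2 := Complex.hasSum_sinh x
  have h2' : HasSum (fun n : ℕ => x * ((((2*n+1).factorial : ℂ))⁻¹ * (x ^ 2) ^ n)) (Complex.sinh x) := by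
    refine h2.congr_fun fun n => ?_
    rw [← pow_mul]
    rw [pow_succ]
    ring
  exact h2'.unique h1

lemma log_ratio {u : ℂ} (hu : ‖u‖ < 1) :
    u * Mfun (u ^ 2) = Complex.log (1 + u) - Complex.log (1 - u) := by
  have hu2 : ‖u ^ 2‖ < 1 := by
    rw [norm_pow]
    nlinarith [norm_nonneg u]
  have hM := (hasSum_Mfun hu2).mul_left u
  have hL : HasSum (fun n : ℕ => (-1)^(n+1) * u^n / n + u^n / n)
      (Complex.log (1 + u) + -Complex.log (1 - u)) :=
    (Complex.hasSum_taylorSeries_log hu).add (Complex.hasSum_taylorSeries_neg_log hu)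
  have hinj : Function.Injective (fun k : ℕ => 2 * k + 1) := by
    intro a b h; simp only [] at h; omega
  have hzero : ∀ n ∉ Set.range (fun k : ℕ => 2 * k + 1),
      ((-1:ℂ))^(n+1) * u^n / n + u^n / n = 0 := by
    intro n hn
    have hev : Even n := by
      rcases Nat.even_or_odd n with h | h
      · exact h
      · exfalso; apply hn; obtain ⟨k, hk⟩ := h; exact ⟨k, by simp only []; omega⟩
    have : ((-1:ℂ))^(n+1) = -1 := by
      rw [pow_succ, hev.neg_one_pow]; ring
    rw [this]; ring
  have hL' := (Function.Injective.hasSum_iff hinj hzero).mpr hL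
  have heq : (fun k : ℕ => u * (2 / (2 * (k:ℂ) + 1) * (u ^ 2) ^ k))
      = (fun n : ℕ => ((-1:ℂ))^(n+1) * u^n / n + u^n / n) ∘ (fun k : ℕ => 2 * k + 1) := by
    funext k
    simp only [Function.comp_apply]
    have hodd : ((-1:ℂ))^(2*k+1+1) = 1 := by
      have : Even (2*k+1+1) := ⟨k+1, by ring⟩
      exact this.neg_one_pow
    rw [hodd]
    have hc : ((2 * k + 1 : ℕ) : ℂ) = 2 * (k:ℂ) + 1 := by push_cast; ring
    rw [hc, ← pow_mul]
    rw [pow_succ]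
    ring
  rw [← heq] at hL'
  have := hM.unique hL'
  rw [this]; ring

lemma log_neg_of_im_neg {x : ℂ} (hx : x.im < 0) :
    Complex.log (-x) = Complex.log x + Real.pi * I := by
  have hx0 : x ≠ 0 := by intro h; rw [h] at hx; simp at hx
  have h1 : Complex.log ((-1) * x) = Complex.log (-1) + Complex.log x := by
    apply Complex.log_mul (by norm_num) hx0
    rw [Complex.arg_neg_one]
    constructor
    · have := Complex.neg_pi_lt_arg x
      linarith [Real.pi_pos]
    · have := Complex.arg_neg_iff.mpr hx
      linarith
  rw [show -x = (-1) * x by ring, h1, Complex.log_neg_one]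
  ring

lemma log_neg_of_im_pos {x : ℂ} (hx : 0 < x.im) :
    Complex.log (-x) = Complex.log x - Real.pi * I := by
  have h := log_neg_of_im_neg (x := -x) (by simpa using hx)
  rw [neg_neg] at h
  rw [h]; ring

lemma im_cpow_half_pos {w : ℂ} (h : 0 < w.im) : 0 < (w ^ ((1:ℂ)/2)).im := by
  have hw0 : w ≠ 0 := by intro hh; rw [hh] at h; simp at h
  rw [Complex.cpow_def_of_ne_zero hw0]
  rw [Complex.exp_im]
  apply mul_pos (Real.exp_pos _)
  have him : (Complex.log w * (1/2)).im = w.arg / 2 := by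
    simp [Complex.mul_im, Complex.log_im, Complex.log_re]
    ring
  rw [him]
  apply Real.sin_pos_of_pos_of_lt_pi
  · have h1 : 0 ≤ w.arg := Complex.arg_nonneg_iff.mpr h.le
    have h2 : w.arg ≠ 0 := by
      intro hc
      rcases Complex.arg_eq_zero_iff.mp hc with ⟨_, h3⟩
      linarith
    have : 0 < w.arg := lt_of_le_of_ne h1 (Ne.symm h2)
    linarith
  · have := Complex.arg_le_pi w
    linarith [Real.pi_pos]

lemma im_cpow_half_neg {w : ℂ} (h : w.im < 0) : (w ^ ((1:ℂ)/2)).im < 0 := by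
  have hw0 : w ≠ 0 := by intro hh; rw [hh] at h; simp at h
  rw [Complex.cpow_def_of_ne_zero hw0]
  rw [Complex.exp_im]
  have hsin : Real.sin ((Complex.log w * (1/2)).im) < 0 := by
    have him : (Complex.log w * (1/2)).im = w.arg / 2 := by
      simp [Complex.mul_im, Complex.log_im, Complex.log_re]
      ring
    rw [him]
    apply Real.sin_neg_of_neg_of_neg_pi_lt
    · have := Complex.arg_neg_iff.mpr h
      linarith
    · have := Complex.neg_pi_lt_arg w
      linarith [Real.pi_pos]
  nlinarith [Real.exp_pos ((Complex.log w * (1/2)).re)]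

-- log of t=(1+u)/(1-u) splits, for ‖u‖<1
lemma log_t_split {u : ℂ} (hu : ‖u‖ < 1) :
    Complex.log ((1 + u) / (1 - u)) = Complex.log (1 + u) - Complex.log (1 - u) := by
  have hre1 : 0 < (1 + u).re := by
    have := Complex.abs_re_le_norm u
    simp only [Complex.add_re, Complex.one_re]
    cases abs_le.mp this with
    | intro h1 h2 => linarith
  have hre2 : 0 < (1 - u).re := by
    have := Complex.abs_re_le_norm u
    simp only [Complex.sub_re, Complex.one_re]
    cases abs_le.mp this with
    | intro h1 h2 => linarith
  have h1 : |(1 + u).arg| < Real.pi / 2 := Complex.abs_arg_lt_pi_div_two_iff.mpr (Or.inl hre1)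
  have h2 : |(1 - u).arg| < Real.pi / 2 := Complex.abs_arg_lt_pi_div_two_iff.mpr (Or.inl hre2)
  have hne2 : (1 - u) ≠ 0 := by
    intro hc
    apply absurd hre2
    rw [hc]; simp
  have hne1 : (1 + u) ≠ 0 := by
    intro hc
    apply absurd hre1
    rw [hc]; simp
  have harg2 : (1 - u).arg ≠ Real.pi := by
    intro hc
    rw [hc] at h2
    rw [abs_of_pos Real.pi_pos] at h2
    linarith [Real.pi_pos]
  have hinv : Complex.log ((1 - u)⁻¹) = -Complex.log (1 - u) := Complex.log_inv _ harg2
  have harginv : ((1 - u)⁻¹).arg = -(1 - u).arg := by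
    rw [Complex.arg_inv]
    rw [if_neg harg2]
  rw [div_eq_mul_inv]
  rw [Complex.log_mul hne1 (inv_ne_zero hne2)]
  · rw [hinv]; ring
  · rw [harginv]
    constructor
    · cases abs_lt.mp h1 with
      | intro a b => cases abs_lt.mp h2 with
        | intro c d => linarith
    · cases abs_lt.mp h1 with
      | intro a b => cases abs_lt.mp h2 with
        | intro c d => linarith

lemma sqrt2_sq : ((Real.sqrt 2 : ℝ) : ℂ) * ((Real.sqrt 2 : ℝ) : ℂ) = 2 := by
  rw [← Complex.ofReal_mul, Real.mul_self_sqrt (by norm_num)]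
  norm_num

lemma kk2 : (((Real.sqrt 2 : ℝ) : ℂ))⁻¹ * (((Real.sqrt 2 : ℝ) : ℂ))⁻¹ * 2 = 1 := by
  have h2 : ((Real.sqrt 2 : ℝ) : ℂ) ≠ 0 := by
    intro h
    have := sqrt2_sq
    rw [h] at this
    simp at this
  rw [← mul_inv, sqrt2_sq]
  norm_num

lemma Vmat_inv : Vmat⁻¹ = (((Real.sqrt 2 : ℝ) : ℂ))⁻¹ • !![1, -I; -I, 1] := by
  have hk := kk2
  apply Matrix.inv_eq_right_inv
  rw [Vmat]
  ext i j
  fin_cases i <;> fin_cases j <;>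
    simp [Matrix.mul_apply, Fin.sum_univ_two, Matrix.smul_apply, smul_eq_mul,
      Matrix.one_apply]
  · linear_combination hk + (-((((Real.sqrt 2 : ℝ) : ℂ))⁻¹ * (((Real.sqrt 2 : ℝ) : ℂ))⁻¹)) * Complex.I_sq
  · ring
  · ring
  · linear_combination hk + (-((((Real.sqrt 2 : ℝ) : ℂ))⁻¹ * (((Real.sqrt 2 : ℝ) : ℂ))⁻¹)) * Complex.I_sq

lemma step1 (P Q E1 E2 X Y : ℂ) (hP : P * E1 = Y) (hQ : Q * E2 = X) :
    !![P, 0; 0, Q] * !![E1, 0; 0, E2] = !![Y, 0; 0, X] := by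
  rw [Matrix.mul_fin_two, ← hP, ← hQ]
  congr 1 <;> ring

lemma step2 (k X Y cc σ : ℂ) (hk : k * k * 2 = 1) (hc : cc * 2 = X + Y)
    (hσ : σ * 2 = X - Y) :
    (k • !![1, I; I, 1]) * !![Y, 0; 0, X] * (k • !![1, -I; -I, 1])
      = !![cc, I * σ; -(I * σ), cc] := by
  ext i j
  fin_cases i <;> fin_cases j <;>
    simp [Matrix.mul_apply, Fin.sum_univ_two, Matrix.smul_apply, smul_eq_mul]
  · linear_combination (-(k * k)) * hc + cc * hk + (-(k * k * X)) * Complex.I_sq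
  · linear_combination (-(I * k * k)) * hσ + (I * σ) * hk
  · linear_combination (I * k * k) * hσ + (-(I * σ)) * hk
  · linear_combination (-(k * k)) * hc + cc * hk + (-(k * k * Y)) * Complex.I_sq

lemma step3 (a ai s4 s4' cc σ rr tt : ℂ) (haai : ai * a = 1)
    (hr : ai * ai * σ = rr) (ht : a * a * σ = tt) :
    !![ai, 0; 0, a] * !![cc, I * σ; -(I * σ), cc] * !![s4 * a, 0; 0, s4' * ai]
      = !![s4 * cc, I * (s4' * rr); -(I * (s4 * tt)), s4' * cc] := by
  ext i j
  fin_cases i <;> fin_cases j <;>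
    simp [Matrix.mul_apply, Fin.sum_univ_two]
  · linear_combination (s4 * cc) * haai
  · linear_combination (I * s4') * hr
  · linear_combination (I * s4) * ht
  · linear_combination (s4' * cc) * haai

lemma step4 (b p q r t : ℂ) :
    !![(1:ℂ), 0; b, 1] * !![p, q; r, t] = !![p, q; b * p + r, b * q + t] := by
  rw [Matrix.mul_fin_two]
  congr 1 <;> ring

noncomputable def cF (α : ℝ) (z : ℂ) : ℂ :=
  CEfun ((α : ℂ) ^ 2 * (z + 1) * (Mfun (z + 1)) ^ 2)

noncomputable def rF (α : ℝ) (z : ℂ) : ℂ :=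
  (α : ℂ) * Mfun (z + 1) * SEfun ((α : ℂ) ^ 2 * (z + 1) * (Mfun (z + 1)) ^ 2)

noncomputable def tF (α : ℝ) (z : ℂ) : ℂ := (z + 1) * rF α z

lemma core (α : ℝ) {z : ℂ} (hz : ‖z + 1‖ < 1 / 2) (him : z.im ≠ 0) :
    ∃ A : ℂ,
      cF α z * 2 = Complex.exp A + Complex.exp (-A) ∧
      Complex.sinh A * 2 = Complex.exp A - Complex.exp (-A) ∧
      (z + 1) ^ (-(1:ℂ)/4) * (z + 1) ^ (-(1:ℂ)/4) * Complex.sinh A = rF α z ∧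
      (z + 1) ^ ((1:ℂ)/4) * (z + 1) ^ ((1:ℂ)/4) * Complex.sinh A = tF α z ∧
      (z + 1) ^ (-(1:ℂ)/4) * (z + 1) ^ ((1:ℂ)/4) = 1 ∧
      (0 < z.im →
        wFun z ^ (-(α:ℂ)) * Complex.exp (-((α:ℂ) * (Real.pi:ℂ) * I)) = Complex.exp (-A) ∧
        wFun z ^ ((α:ℂ)) * Complex.exp ((α:ℂ) * (Real.pi:ℂ) * I) = Complex.exp A) ∧
      (z.im < 0 →
        wFun z ^ (-(α:ℂ)) * Complex.exp ((α:ℂ) * (Real.pi:ℂ) * I) = Complex.exp (-A) ∧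
        wFun z ^ ((α:ℂ)) * Complex.exp (-((α:ℂ) * (Real.pi:ℂ) * I)) = Complex.exp A) := by
  have h0 : z + 1 ≠ 0 := by
    intro h
    apply him
    have : (z + 1).im = 0 := by rw [h]; simp
    simpa using this
  set u : ℂ := (z + 1) ^ ((1:ℂ)/2) with hu
  have hu2 : u * u = z + 1 := by
    rw [hu, ← Complex.cpow_add _ _ h0]
    norm_num
  have hunorm : ‖u‖ < 1 := by
    have habs : ‖u‖ * ‖u‖ = ‖z + 1‖ := by
      rw [← norm_mul, hu2]
    nlinarith [norm_nonneg u]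
  have hu0 : u ≠ 0 := by
    intro h
    rw [h, mul_zero] at hu2
    exact h0 hu2.symm
  have h1u : (1 : ℂ) + u ≠ 0 := by
    intro h
    have : u = -1 := by linear_combination h
    rw [this] at hunorm
    simp at hunorm
  have h1u' : (1 : ℂ) - u ≠ 0 := by
    intro h
    have : u = 1 := by linear_combination -h
    rw [this] at hunorm
    simp at hunorm
  have hnu : ‖u‖ < 1 := by exact hunorm
  have hLt : u * Mfun (z + 1) = Complex.log (1 + u) - Complex.log (1 - u) := by
    have h := log_ratio hnu
    rwa [show u ^ 2 = z + 1 by rw [pow_two]; exact hu2] at h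
  set Lt : ℂ := Complex.log (1 + u) - Complex.log (1 - u) with hLtdef
  refine ⟨(α : ℂ) * Lt, ?_, ?_, ?_, ?_, ?_, ?_, ?_⟩
  case _ =>
    -- cF * 2 = exp A + exp (-A)
    have hA2 : ((α : ℂ) * Lt) ^ 2 = (α : ℂ) ^ 2 * (z + 1) * (Mfun (z + 1)) ^ 2 := by
      rw [← hLt]
      linear_combination ((α:ℂ)^2 * (Mfun (z+1))^2) * hu2
    have hcosh : Complex.cosh ((α : ℂ) * Lt) = cF α z := by
      rw [cosh_eq_CEfun, hA2]; rfl
    rw [← hcosh]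
    simp only [Complex.cosh]
    ring
  case _ =>
    simp only [Complex.sinh]
    ring
  case _ =>
    have hA2 : ((α : ℂ) * Lt) ^ 2 = (α : ℂ) ^ 2 * (z + 1) * (Mfun (z + 1)) ^ 2 := by
      rw [← hLt]
      linear_combination ((α:ℂ)^2 * (Mfun (z+1))^2) * hu2
    have hsinh : Complex.sinh ((α : ℂ) * Lt) = u * rF α z := by
      rw [sinh_eq_SEfun, hA2, ← hLt, rF]
      ring
    have hai2 : (z + 1) ^ (-(1:ℂ)/4) * (z + 1) ^ (-(1:ℂ)/4) = u⁻¹ := by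
      rw [← Complex.cpow_add _ _ h0, show (-(1:ℂ)/4 + -(1:ℂ)/4) = -((1:ℂ)/2) by norm_num,
        Complex.cpow_neg]
    rw [hai2, hsinh, ← mul_assoc, inv_mul_cancel₀ hu0, one_mul]
  case _ =>
    have hA2 : ((α : ℂ) * Lt) ^ 2 = (α : ℂ) ^ 2 * (z + 1) * (Mfun (z + 1)) ^ 2 := by
      rw [← hLt]
      linear_combination ((α:ℂ)^2 * (Mfun (z+1))^2) * hu2
    have hsinh : Complex.sinh ((α : ℂ) * Lt) = u * rF α z := by
      rw [sinh_eq_SEfun, hA2, ← hLt, rF]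
      ring
    have ha2 : (z + 1) ^ ((1:ℂ)/4) * (z + 1) ^ ((1:ℂ)/4) = u := by
      rw [← Complex.cpow_add _ _ h0, show ((1:ℂ)/4 + (1:ℂ)/4) = (1:ℂ)/2 by norm_num]
    rw [ha2, hsinh, tF, ← hu2]
    ring
  case _ =>
    rw [← Complex.cpow_add _ _ h0, show (-(1:ℂ)/4 + (1:ℂ)/4) = 0 by norm_num,
      Complex.cpow_zero]
  case _ =>
    intro hpos
    have huim : 0 < u.im := by
      have := im_cpow_half_pos (w := z + 1) (by simpa using hpos)
      rwa [← hu] at this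
    have hns : 0 < Complex.normSq (1 - u) := Complex.normSq_pos.mpr h1u'
    have himt : 0 < ((1 + u) / (1 - u)).im := by
      rw [Complex.div_im]
      have e : (1+u).im * (1-u).re / Complex.normSq (1-u)
          - (1+u).re * (1-u).im / Complex.normSq (1-u)
          = 2 * u.im / Complex.normSq (1-u) := by
        simp only [Complex.add_im, Complex.sub_im, Complex.add_re, Complex.sub_re,
          Complex.one_im, Complex.one_re]
        field_simp
        ring
      rw [e]
      exact div_pos (by linarith) hns
    have hw : wFun z = -((1 + u) / (1 - u)) := by
      rw [wFun, ← hu]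
      have hum1 : u - 1 ≠ 0 := by
        intro h
        apply h1u'
        linear_combination -h
      field_simp
      ring
    have hw0 : wFun z ≠ 0 := by
      rw [hw]
      exact neg_ne_zero.mpr (div_ne_zero h1u h1u')
    have hlogw : Complex.log (wFun z) = Lt - Real.pi * I := by
      rw [hw, log_neg_of_im_pos himt, log_t_split hnu, hLtdef]
    constructor
    · rw [Complex.cpow_def_of_ne_zero hw0, hlogw, ← Complex.exp_add]
      congr 1
      push_cast
      ring
    · rw [Complex.cpow_def_of_ne_zero hw0, hlogw, ← Complex.exp_add]
      congr 1
      push_cast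
      ring
  case _ =>
    intro hneg
    have huim : u.im < 0 := by
      have := im_cpow_half_neg (w := z + 1) (by simpa using hneg)
      rwa [← hu] at this
    have hns : 0 < Complex.normSq (1 - u) := Complex.normSq_pos.mpr h1u'
    have himt : ((1 + u) / (1 - u)).im < 0 := by
      rw [Complex.div_im]
      have e : (1+u).im * (1-u).re / Complex.normSq (1-u)
          - (1+u).re * (1-u).im / Complex.normSq (1-u)
          = 2 * u.im / Complex.normSq (1-u) := by
        simp only [Complex.add_im, Complex.sub_im, Complex.add_re, Complex.sub_re,
          Complex.one_im, Complex.one_re]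
        field_simp
        ring
      rw [e]
      exact div_neg_of_neg_of_pos (by linarith) hns
    have hw : wFun z = -((1 + u) / (1 - u)) := by
      rw [wFun, ← hu]
      have hum1 : u - 1 ≠ 0 := by
        intro h
        apply h1u'
        linear_combination -h
      field_simp
      ring
    have hw0 : wFun z ≠ 0 := by
      rw [hw]
      exact neg_ne_zero.mpr (div_ne_zero h1u h1u')
    have hlogw : Complex.log (wFun z) = Lt + Real.pi * I := by
      rw [hw, log_neg_of_im_neg himt, log_t_split hnu, hLtdef]
    constructor
    · rw [Complex.cpow_def_of_ne_zero hw0, hlogw, ← Complex.exp_add]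
      congr 1
      push_cast
      ring
    · rw [Complex.cpow_def_of_ne_zero hw0, hlogw, ← Complex.exp_add]
      congr 1
      push_cast
      ring

lemma MfunZ_diffAt {z : ℂ} (h : ‖z + 1‖ < 1) :
    DifferentiableAt ℂ (fun z : ℂ => Mfun (z + 1)) z :=
  DifferentiableAt.comp z (Mfun_diffAt h) (differentiableAt_fun_id.add_const 1)

lemma gArg_diffAt (α : ℝ) {z : ℂ} (h : ‖z + 1‖ < 1) :
    DifferentiableAt ℂ (fun z : ℂ => (α:ℂ)^2 * (z+1) * (Mfun (z+1))^2) z :=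
  ((differentiableAt_const _).mul (differentiableAt_fun_id.add_const 1)).mul
    ((MfunZ_diffAt h).pow 2)

lemma cF_diffAt (α : ℝ) {z : ℂ} (h : ‖z + 1‖ < 1) :
    DifferentiableAt ℂ (fun z => cF α z) z := by
  simp only [cF]
  exact DifferentiableAt.comp z (CEfun_diffAt _) (gArg_diffAt α h)

lemma rF_diffAt (α : ℝ) {z : ℂ} (h : ‖z + 1‖ < 1) :
    DifferentiableAt ℂ (fun z => rF α z) z := by
  simp only [rF]
  exact ((differentiableAt_const _).mul (MfunZ_diffAt h)).mul
    (DifferentiableAt.comp z (SEfun_diffAt _) (gArg_diffAt α h))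

lemma tF_diffAt (α : ℝ) {z : ℂ} (h : ‖z + 1‖ < 1) :
    DifferentiableAt ℂ (fun z => tF α z) z := by
  simp only [tF]
  exact (differentiableAt_fun_id.add_const 1).mul (rF_diffAt α h)

lemma ball_norm {z : ℂ} (hz : z ∈ Metric.ball (-1 : ℂ) (1 / 2)) :
    ‖z + 1‖ < 1 / 2 := by
  rw [Metric.mem_ball, Complex.dist_eq, show z - (-1) = z + 1 by ring] at hz
  exact hz

/-- The analytic prefactor of the Airy local parametrix near `z = −1` extends
holomorphically to the disc `{|z+1| < 1/2}`. -/
theorem stmt14 (α : ℝ) (hα : -1 / 2 < α) (s : ℝ) (hs : 0 < s) :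
    ∃ F : ℂ → Matrix (Fin 2) (Fin 2) ℂ,
      (∀ j k : Fin 2,
        DifferentiableOn ℂ (fun z => F z j k) (Metric.ball (-1 : ℂ) (1 / 2))) ∧
      (∀ z ∈ Metric.ball (-1 : ℂ) (1 / 2), 0 < z.im →
        F z = Pinf α z *
          !![Complex.exp (-((α : ℂ) * (Real.pi : ℂ) * I)), 0;
             0, Complex.exp ((α : ℂ) * (Real.pi : ℂ) * I)] *
          Vmat⁻¹ * scaleDiag s z) ∧
      (∀ z ∈ Metric.ball (-1 : ℂ) (1 / 2), z.im < 0 →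
        F z = Pinf α z *
          !![Complex.exp ((α : ℂ) * (Real.pi : ℂ) * I), 0;
             0, Complex.exp (-((α : ℂ) * (Real.pi : ℂ) * I))] *
          Vmat⁻¹ * scaleDiag s z) := by
  set s4 : ℂ := ((s ^ ((1 : ℝ) / 4) : ℝ) : ℂ) with hs4
  set s4' : ℂ := ((s ^ (-(1 : ℝ) / 4) : ℝ) : ℂ) with hs4'
  set b : ℂ := 2 * (α : ℂ) * I with hb
  refine ⟨fun z => !![s4 * cF α z, I * (s4' * rF α z);
      b * (s4 * cF α z) + -(I * (s4 * tF α z)),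
      b * (I * (s4' * rF α z)) + s4' * cF α z], ?_, ?_, ?_⟩
  · intro j k
    intro z hz
    have h1 : ‖z + 1‖ < 1 := by
      have := ball_norm hz
      linarith
    apply DifferentiableAt.differentiableWithinAt
    fin_cases j <;> fin_cases k <;>
      simp only [Matrix.cons_val', Matrix.cons_val_zero, Matrix.cons_val_one,
        Matrix.head_cons, Matrix.head_fin_const, Matrix.empty_val',
        Matrix.cons_val_fin_one]
    · exact (cF_diffAt α h1).const_mul _
    · exact ((rF_diffAt α h1).const_mul _).const_mul _
    · exact (((cF_diffAt α h1).const_mul _).const_mul _).add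
        ((((tF_diffAt α h1).const_mul _).const_mul _).neg)
    · exact ((((rF_diffAt α h1).const_mul _).const_mul _).const_mul _).add
        ((cF_diffAt α h1).const_mul _)
  · intro z hz him
    obtain ⟨A, b1, b4, b2, b3, b5, hposf, _⟩ :=
      core α (ball_norm hz) (by intro h; rw [h] at him; exact lt_irrefl _ him)
    obtain ⟨hP, hQ⟩ := hposf him
    have e1 := step1 (wFun z ^ (-(α:ℂ))) (wFun z ^ ((α:ℂ)))
      (Complex.exp (-((α : ℂ) * (Real.pi : ℂ) * I)))
      (Complex.exp ((α : ℂ) * (Real.pi : ℂ) * I))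
      (Complex.exp A) (Complex.exp (-A)) hP hQ
    have e2 := step2 (((Real.sqrt 2 : ℝ) : ℂ))⁻¹ (Complex.exp A) (Complex.exp (-A))
      (cF α z) (Complex.sinh A) kk2 b1 b4
    have e3 := step3 ((z + 1) ^ ((1:ℂ)/4)) ((z + 1) ^ (-(1:ℂ)/4)) s4 s4'
      (cF α z) (Complex.sinh A) (rF α z) (tF α z) b5 b2 b3
    have e4 := step4 b (s4 * cF α z) (I * (s4' * rF α z)) (-(I * (s4 * tF α z)))
      (s4' * cF α z)
    symm
    rw [Pinf, Vmat_inv, scaleDiag, Vmat]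
    rw [mul_assoc (!![1, 0; b, 1] *
        !![(z + 1) ^ (-(1 : ℂ) / 4), 0; 0, (z + 1) ^ ((1 : ℂ) / 4)] *
        ((((Real.sqrt 2 : ℝ) : ℂ))⁻¹ • !![1, I; I, 1]))]
    rw [e1]
    rw [mul_assoc (!![1, 0; b, 1] * !![(z + 1) ^ (-(1 : ℂ) / 4), 0; 0, (z + 1) ^ ((1 : ℂ) / 4)])]
    rw [mul_assoc (!![1, 0; b, 1] * !![(z + 1) ^ (-(1 : ℂ) / 4), 0; 0, (z + 1) ^ ((1 : ℂ) / 4)])]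
    rw [e2, ← hs4, ← hs4']
    rw [mul_assoc !![1, 0; b, 1]]
    rw [mul_assoc !![1, 0; b, 1]]
    rw [e3, e4]
  · intro z hz him
    obtain ⟨A, b1, b4, b2, b3, b5, _, hnegf⟩ :=
      core α (ball_norm hz) (by intro h; rw [h] at him; exact lt_irrefl _ him)
    obtain ⟨hP, hQ⟩ := hnegf him
    have e1 := step1 (wFun z ^ (-(α:ℂ))) (wFun z ^ ((α:ℂ)))
      (Complex.exp ((α : ℂ) * (Real.pi : ℂ) * I))
      (Complex.exp (-((α : ℂ) * (Real.pi : ℂ) * I)))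
      (Complex.exp A) (Complex.exp (-A)) hP hQ
    have e2 := step2 (((Real.sqrt 2 : ℝ) : ℂ))⁻¹ (Complex.exp A) (Complex.exp (-A))
      (cF α z) (Complex.sinh A) kk2 b1 b4
    have e3 := step3 ((z + 1) ^ ((1:ℂ)/4)) ((z + 1) ^ (-(1:ℂ)/4)) s4 s4'
      (cF α z) (Complex.sinh A) (rF α z) (tF α z) b5 b2 b3
    have e4 := step4 b (s4 * cF α z) (I * (s4' * rF α z)) (-(I * (s4 * tF α z)))
      (s4' * cF α z)
    symm
    rw [Pinf, Vmat_inv, scaleDiag, Vmat]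
    rw [mul_assoc (!![1, 0; b, 1] *
        !![(z + 1) ^ (-(1 : ℂ) / 4), 0; 0, (z + 1) ^ ((1 : ℂ) / 4)] *
        ((((Real.sqrt 2 : ℝ) : ℂ))⁻¹ • !![1, I; I, 1]))]
    rw [e1]
    rw [mul_assoc (!![1, 0; b, 1] * !![(z + 1) ^ (-(1 : ℂ) / 4), 0; 0, (z + 1) ^ ((1 : ℂ) / 4)])]
    rw [mul_assoc (!![1, 0; b, 1] * !![(z + 1) ^ (-(1 : ℂ) / 4), 0; 0, (z + 1) ^ ((1 : ℂ) / 4)])]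
    rw [e2, ← hs4, ← hs4']
    rw [mul_assoc !![1, 0; b, 1]]
    rw [mul_assoc !![1, 0; b, 1]]
    rw [e3, e4]
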